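/- Let G be a finite connected simple graph not isomorphic to K2, and let H = ρ(λ(G)), whose vertices are the sibling equivalence classes of λ(G). Call a vertex of H T-tagged if it is a singleton class {v} with v adjacent in G to at least one leaf of G, and S-tagged if it is a class of size at least 2. Then: (1) if two distinct vertices of H are siblings in H, at least one of them is T-tagged; (2) every leaf of H that is neither T-tagged nor S-tagged is adjacent in H to an S-tagged vertex. -/

import Mathlib

open SimpleGraph

universe u

/-- The closed neighborhood of a vertex. -/
def closedNbhd {V : Type u} (G : SimpleGraph V) (v : V) : Set V :=
  insert v (G.neighborSet v)

/-- Two vertices are siblings if they share the same closed neighborhood. -/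
def Sibling {V : Type u} (G : SimpleGraph V) (u v : V) : Prop :=
  closedNbhd G u = closedNbhd G v

/-- A leaf is a vertex of degree one. -/
def IsLeaf {V : Type u} (G : SimpleGraph V) (v : V) : Prop :=
  Nat.card (G.neighborSet v) = 1

/-- The tuft number: the maximal number of leaves adjacent to a single vertex. -/
noncomputable def tuftNumber {V : Type u} (G : SimpleGraph V) : ℕ :=
  ⨆ v : V, Nat.card {u | IsLeaf G u ∧ G.Adj v u}

/-- The sibling number: the maximum over vertices `v` of the number of vertices sharing
the closed neighborhood of `v`, minus one. -/
noncomputable def siblingNumber {V : Type u} (G : SimpleGraph V) : ℕ :=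
  ⨆ v : V, (Nat.card {u | Sibling G u v} - 1)

/-- The complete graph on two vertices. -/
def K2 : SimpleGraph (Fin 2) := ⊤

/-- The sibling relation as a setoid. -/
def siblingSetoid {V : Type u} (G : SimpleGraph V) : Setoid V :=
  ⟨Sibling G, ⟨fun _ => rfl, fun {_ _} h => Eq.symm h, fun {_ _ _} h h' => Eq.trans h h'⟩⟩

/-- `rho G` is the quotient of `G` by the sibling relation: vertices are sibling
equivalence classes, two distinct classes being adjacent iff some pair of
representatives is adjacent. -/
def rho {V : Type u} (G : SimpleGraph V) : SimpleGraph (Quotient (siblingSetoid G)) where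
  Adj A B := A ≠ B ∧ ∃ u v : V, Quotient.mk (siblingSetoid G) u = A ∧
      Quotient.mk (siblingSetoid G) v = B ∧ G.Adj u v
  symm := by
    constructor
    rintro A B ⟨hne, u, v, hu, hv, h⟩
    exact ⟨hne.symm, v, u, hv, hu, h.symm⟩
  loopless := by
    constructor
    rintro A ⟨hne, -⟩
    exact hne rfl

/-- `lamS G S` is the induced subgraph on the complement of `S`. -/
def lamS {V : Type u} (G : SimpleGraph V) (S : Set V) : SimpleGraph ↥(Sᶜ) :=
  SimpleGraph.induce Sᶜ G

/-- `lam G` is the induced subgraph on the set of non-leaf vertices. -/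
def lam {V : Type u} (G : SimpleGraph V) : SimpleGraph ↥{v : V | ¬ IsLeaf G v} :=
  SimpleGraph.induce {v : V | ¬ IsLeaf G v} G

/-- A finite graph, bundled with its vertex type. -/
structure FinGraph : Type (u + 1) where
  V : Type u
  [finite : Finite V]
  G : SimpleGraph V

attribute [instance] FinGraph.finite

/-- One reduction step: remove all leaves, then contract each sibling class to a point. -/
def redStep (X : FinGraph.{u}) : FinGraph.{u} :=
  ⟨Quotient (siblingSetoid (lam X.G)), rho (lam X.G)⟩

/-- The reduction of a finite graph: iterate `redStep` until it stabilizes (up to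
isomorphism this happens after at most `Nat.card X.V` steps). -/
noncomputable def reduction (X : FinGraph.{u}) : FinGraph.{u} :=
  redStep^[Nat.card X.V] X

/-- `G` contains an induced cycle on `n` vertices. -/
def HasInducedCycle {V : Type u} (G : SimpleGraph V) (n : ℕ) : Prop :=
  ∃ s : Set V, Nonempty (SimpleGraph.induce s G ≃g cycleGraph n)

/-- A graph is chordal if it has no induced cycle on four or more vertices. -/
def Chordal {V : Type u} (G : SimpleGraph V) : Prop :=
  ∀ m : ℕ, 4 ≤ m → ¬ HasInducedCycle G m

/-- The setoid identifying isomorphic graphs on `Fin n` satisfying a property `P`. -/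
def graphSetoid (n : ℕ) (P : SimpleGraph (Fin n) → Prop) :
    Setoid {G : SimpleGraph (Fin n) // P G} :=
  ⟨fun G H => Nonempty (G.1 ≃g H.1),
    ⟨fun _ => ⟨Iso.refl⟩, fun ⟨e⟩ => ⟨e.symm⟩, fun ⟨e⟩ ⟨f⟩ => ⟨e.trans f⟩⟩⟩

/-- The number of isomorphism classes of graphs on `n` vertices satisfying `P`. -/
noncomputable def numClasses (n : ℕ) (P : SimpleGraph (Fin n) → Prop) : ℕ :=
  Nat.card (Quotient (graphSetoid n P))

/-- A vertex of `ρ(λ(G))` is `T`-tagged if it is a singleton sibling class `{x}` with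
`x` adjacent in `G` to at least one leaf of `G`. -/
def Ttagged {V : Type u} (G : SimpleGraph V)
    (A : Quotient (siblingSetoid (lam G))) : Prop :=
  ∃ x : ↥{v : V | ¬ IsLeaf G v}, Quotient.mk (siblingSetoid (lam G)) x = A ∧
    (∀ y : ↥{v : V | ¬ IsLeaf G v}, Quotient.mk (siblingSetoid (lam G)) y = A → y = x) ∧
    ∃ l : V, IsLeaf G l ∧ G.Adj (x : V) l

/-- A vertex of `ρ(λ(G))` is `S`-tagged if it is a sibling class of size at least two. -/
def Stagged {V : Type u} (G : SimpleGraph V)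
    (A : Quotient (siblingSetoid (lam G))) : Prop :=
  ∃ x y : ↥{v : V | ¬ IsLeaf G v}, x ≠ y ∧
    Quotient.mk (siblingSetoid (lam G)) x = A ∧
    Quotient.mk (siblingSetoid (lam G)) y = A

lemma mem_closedNbhd {V : Type u} (G : SimpleGraph V) {x c : V} :
    c ∈ closedNbhd G x ↔ c = x ∨ G.Adj x c := by
  simp [closedNbhd]

lemma rho_adj_reps {V : Type u} (Gl : SimpleGraph V) {u v : V}
    (h : (rho Gl).Adj (Quotient.mk (siblingSetoid Gl) u) (Quotient.mk (siblingSetoid Gl) v)) :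
    Gl.Adj u v := by
  obtain ⟨hne, u', v', hu, hv, huv⟩ := h
  have hsu : Sibling Gl u' u := Quotient.exact hu
  have hsv : Sibling Gl v' v := Quotient.exact hv
  have h1 : v' ∈ closedNbhd Gl u := by
    rw [← hsu]
    exact (mem_closedNbhd Gl).mpr (Or.inr huv)
  rcases (mem_closedNbhd Gl).mp h1 with h1 | h1
  · rw [h1] at hv; exact absurd hv hne
  · have h2 : u ∈ closedNbhd Gl v := by
      rw [← hsv]
      exact (mem_closedNbhd Gl).mpr (Or.inr h1.symm)
    rcases (mem_closedNbhd Gl).mp h2 with h2 | h2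
    · exact absurd (by rw [h2]) hne
    · exact h2.symm

lemma rho_sibling_subset {V : Type u} (Gl : SimpleGraph V) {a b : V}
    (hAB : Quotient.mk (siblingSetoid Gl) a ≠ Quotient.mk (siblingSetoid Gl) b)
    (hsib : Sibling (rho Gl) (Quotient.mk (siblingSetoid Gl) a)
      (Quotient.mk (siblingSetoid Gl) b)) :
    closedNbhd Gl a ⊆ closedNbhd Gl b := by
  have hmemA : Quotient.mk (siblingSetoid Gl) a ∈
      closedNbhd (rho Gl) (Quotient.mk (siblingSetoid Gl) b) := by
    rw [← hsib]; exact (mem_closedNbhd _).mpr (Or.inl rfl)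
  have hadjH : (rho Gl).Adj (Quotient.mk (siblingSetoid Gl) b)
      (Quotient.mk (siblingSetoid Gl) a) := by
    rcases (mem_closedNbhd _).mp hmemA with h | h
    · exact absurd h hAB
    · exact h
  have hab : Gl.Adj a b := (rho_adj_reps Gl hadjH).symm
  intro c hc
  rcases (mem_closedNbhd Gl).mp hc with rfl | hac
  · exact (mem_closedNbhd Gl).mpr (Or.inr hab.symm)
  · by_cases h1 : Quotient.mk (siblingSetoid Gl) c = Quotient.mk (siblingSetoid Gl) b
    · have hcb : Sibling Gl c b := Quotient.exact h1
      rw [← hcb]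
      exact (mem_closedNbhd Gl).mpr (Or.inl rfl)
    · by_cases h2 : Quotient.mk (siblingSetoid Gl) c = Quotient.mk (siblingSetoid Gl) a
      · have hca : Sibling Gl c a := Quotient.exact h2
        have hb : b ∈ closedNbhd Gl c := by
          rw [hca]; exact (mem_closedNbhd Gl).mpr (Or.inr hab)
        rcases (mem_closedNbhd Gl).mp hb with rfl | hcb
        · exact (mem_closedNbhd Gl).mpr (Or.inl rfl)
        · exact (mem_closedNbhd Gl).mpr (Or.inr hcb.symm)
      · have h3 : (rho Gl).Adj (Quotient.mk (siblingSetoid Gl) a)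
            (Quotient.mk (siblingSetoid Gl) c) :=
          ⟨fun h => h2 h.symm, a, c, rfl, rfl, hac⟩
        have hmemC : Quotient.mk (siblingSetoid Gl) c ∈
            closedNbhd (rho Gl) (Quotient.mk (siblingSetoid Gl) b) := by
          rw [← hsib]; exact (mem_closedNbhd _).mpr (Or.inr h3)
        rcases (mem_closedNbhd _).mp hmemC with h | h
        · exact absurd h h1
        · exact (mem_closedNbhd Gl).mpr (Or.inr (rho_adj_reps Gl h))

/-- For a connected graph `G` other than `K2` and `H = ρ(λ(G))`: (1) if two distinct
vertices of `H` are siblings in `H`, at least one of them is `T`-tagged; (2) every leaf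
of `H` which is neither `T`-tagged nor `S`-tagged is adjacent in `H` to an `S`-tagged
vertex. -/
theorem decorated_graph_conditions {V : Type} [Fintype V] (G : SimpleGraph V)
    (hc : G.Connected) (hK2 : ¬ Nonempty (G ≃g K2)) :
    (∀ A B : Quotient (siblingSetoid (lam G)), A ≠ B →
        Sibling (rho (lam G)) A B → Ttagged G A ∨ Ttagged G B) ∧
    (∀ A : Quotient (siblingSetoid (lam G)), IsLeaf (rho (lam G)) A →
        ¬ Ttagged G A → ¬ Stagged G A →
        ∃ B, Stagged G B ∧ (rho (lam G)).Adj A B) := by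
  constructor
  · intro A B hAB hsib
    exfalso
    obtain ⟨a, rfl⟩ := Quotient.exists_rep A
    obtain ⟨b, rfl⟩ := Quotient.exists_rep B
    exact hAB (Quotient.sound (Set.Subset.antisymm
      (rho_sibling_subset (lam G) hAB hsib)
      (rho_sibling_subset (lam G) hAB.symm hsib.symm)))
  · intro A hleaf hT hS
    obtain ⟨a, ha⟩ := Quotient.exists_rep A
    have hsing : ∀ y, Quotient.mk (siblingSetoid (lam G)) y = A → y = a := by
      intro y hy
      by_contra hne
      exact hS ⟨y, a, hne, hy, ha⟩
    have hnoleaf : ∀ l : V, IsLeaf G l → ¬ G.Adj (a : V) l := by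
      intro l hl hadj
      exact hT ⟨a, ha, hsing, l, hl, hadj⟩
    -- neighbor set of A in rho (lam G) is a nonempty subsingleton
    obtain ⟨hsub, hne⟩ := (Nat.card_eq_one_iff_unique).mp hleaf
    obtain ⟨⟨B0, hB0⟩⟩ := hne
    obtain ⟨hne0, u, v, hu, hv, huv⟩ := hB0
    have hua : u = a := hsing u hu
    have hav : G.Adj (a : V) (v : V) := by
      have := huv
      rw [hua] at this
      exact this
    -- a has at least two neighbors in G
    have hfinN : Finite (G.neighborSet (a : V)) := Subtype.finite
    have hpos : 0 < Nat.card (G.neighborSet (a : V)) :=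
      @Nat.card_pos _ ⟨⟨v, hav⟩⟩ hfinN
    have hone : Nat.card (G.neighborSet (a : V)) ≠ 1 := a.2
    have hlt : 1 < Nat.card (G.neighborSet (a : V)) := lt_of_le_of_ne hpos hone.symm
    have hnt : Nontrivial (G.neighborSet (a : V)) :=
      @Finite.one_lt_card_iff_nontrivial _ hfinN |>.mp hlt
    obtain ⟨⟨b1, hb1⟩, ⟨b2, hb2⟩, hbne⟩ := hnt
    have hb12 : b1 ≠ b2 := fun h => hbne (by simp [h])
    have hb1nl : b1 ∈ {v : V | ¬ IsLeaf G v} := fun h => hnoleaf b1 h hb1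
    have hb2nl : b2 ∈ {v : V | ¬ IsLeaf G v} := fun h => hnoleaf b2 h hb2
    set b1' : ↥{v : V | ¬ IsLeaf G v} := ⟨b1, hb1nl⟩ with hb1'
    set b2' : ↥{v : V | ¬ IsLeaf G v} := ⟨b2, hb2nl⟩ with hb2'
    have hadj1 : (lam G).Adj a b1' := hb1
    have hadj2 : (lam G).Adj a b2' := hb2
    have hQ1 : Quotient.mk (siblingSetoid (lam G)) b1' ≠ A := by
      intro h
      have := hsing b1' h
      exact G.irrefl (by rw [← this] at hb1; exact hb1)
    have hQ2 : Quotient.mk (siblingSetoid (lam G)) b2' ≠ A := by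
      intro h
      have := hsing b2' h
      exact G.irrefl (by rw [← this] at hb2; exact hb2)
    have hH1 : (rho (lam G)).Adj A (Quotient.mk (siblingSetoid (lam G)) b1') :=
      ⟨hQ1.symm, a, b1', ha, rfl, hadj1⟩
    have hH2 : (rho (lam G)).Adj A (Quotient.mk (siblingSetoid (lam G)) b2') :=
      ⟨hQ2.symm, a, b2', ha, rfl, hadj2⟩
    have hBB : Quotient.mk (siblingSetoid (lam G)) b1'
        = Quotient.mk (siblingSetoid (lam G)) b2' := by
      have := hsub.elim (⟨_, hH1⟩ : ↥((rho (lam G)).neighborSet A)) ⟨_, hH2⟩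
      exact congrArg Subtype.val this
    refine ⟨Quotient.mk (siblingSetoid (lam G)) b1',
      ⟨b1', b2', ?_, rfl, hBB.symm⟩, hH1⟩
    intro h
    exact hb12 (congrArg Subtype.val h)
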